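/- Let φ, φ_1, …, φ_n be vectors in ℝ^d and let Λ = I + Σ_{i=1}^n φ_i φ_iᵀ, which is positive definite and hence invertible. Then Σ_{i=1}^n |φᵀ Λ⁻¹ φ_i| ≤ sqrt(d * n) * sqrt(φᵀ Λ⁻¹ φ). -/

import Mathlib

open Matrix Finset

lemma psd_vecMulVec {d : ℕ} (v : Fin d → ℝ) : (vecMulVec v v).PosSemidef := by
  refine Matrix.PosSemidef.of_dotProduct_mulVec_nonneg ?_ ?_
  · ext i j
    simp [conjTranspose_apply, vecMulVec_apply, mul_comm]
  · intro x
    have h : star x ⬝ᵥ (vecMulVec v v *ᵥ x) = (v ⬝ᵥ x) * (v ⬝ᵥ x) := by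
      simp [dotProduct, mulVec, vecMulVec_apply, Finset.mul_sum, Finset.sum_mul]
      rw [Finset.sum_comm]
      apply Finset.sum_congr rfl; intro i _
      apply Finset.sum_congr rfl; intro j _
      ring
    rw [h]
    exact mul_self_nonneg _

lemma cs_psd {d : ℕ} {M : Matrix (Fin d) (Fin d) ℝ} (hM : M.PosSemidef)
    (x y : Fin d → ℝ) :
    (x ⬝ᵥ (M *ᵥ y))^2 ≤ (x ⬝ᵥ (M *ᵥ x)) * (y ⬝ᵥ (M *ᵥ y)) := by
  have hT : Mᵀ = M := by
    ext i j
    have := congrFun (congrFun hM.1 i) j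
    simpa using this
  have h1 : x ⬝ᵥ (M *ᵥ y) = y ⬝ᵥ (M *ᵥ x) := by
    rw [dotProduct_mulVec, ← mulVec_transpose, hT, dotProduct_comm]
  have hq : ∀ t : ℝ, 0 ≤ (y ⬝ᵥ (M *ᵥ y)) * (t * t) + (2 * (x ⬝ᵥ (M *ᵥ y))) * t
      + (x ⬝ᵥ (M *ᵥ x)) := by
    intro t
    have key := hM.dotProduct_mulVec_nonneg (x + t • y)
    simp only [star_trivial, mulVec_add, mulVec_smul, dotProduct_add, add_dotProduct,
      dotProduct_smul, smul_dotProduct, smul_eq_mul] at key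
    have heq : x ⬝ᵥ M *ᵥ x + t * (y ⬝ᵥ M *ᵥ x) + t * (x ⬝ᵥ M *ᵥ y + t * (y ⬝ᵥ M *ᵥ y))
        = (y ⬝ᵥ (M *ᵥ y)) * (t * t) + (2 * (x ⬝ᵥ (M *ᵥ y))) * t + (x ⬝ᵥ (M *ᵥ x)) := by
      rw [h1]; ring
    rw [← heq]
    linarith [key]
  have := discrim_le_zero hq
  rw [discrim] at this
  nlinarith [this]

lemma trace_mul_vecMulVec {d : ℕ} (M : Matrix (Fin d) (Fin d) ℝ) (v : Fin d → ℝ) :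
    (M * vecMulVec v v).trace = v ⬝ᵥ (M *ᵥ v) := by
  simp only [Matrix.trace, Matrix.diag_apply, Matrix.mul_apply, vecMulVec_apply,
    Matrix.mulVec, dotProduct, Finset.mul_sum]
  apply Finset.sum_congr rfl; intro i _
  apply Finset.sum_congr rfl; intro j _
  ring

lemma trace_nonneg_psd {d : ℕ} {M : Matrix (Fin d) (Fin d) ℝ} (hM : M.PosSemidef) :
    0 ≤ M.trace := by
  apply Finset.sum_nonneg
  intro i _
  have := hM.dotProduct_mulVec_nonneg (Pi.single i 1)
  simpa [dotProduct, mulVec, Pi.single_apply] using this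

open Matrix in
theorem sum_abs_inner_inv_le (d n : ℕ) (φ : Fin d → ℝ) (ψ : Fin n → (Fin d → ℝ))
    (Λ : Matrix (Fin d) (Fin d) ℝ)
    (hΛ : Λ = 1 + ∑ i : Fin n, vecMulVec (ψ i) (ψ i)) :
    ∑ i : Fin n, |φ ⬝ᵥ (Λ⁻¹ *ᵥ ψ i)|
      ≤ Real.sqrt ((d : ℝ) * n) * Real.sqrt (φ ⬝ᵥ (Λ⁻¹ *ᵥ φ)) := by
  set S := ∑ i : Fin n, vecMulVec (ψ i) (ψ i) with hSdef
  have hS : S.PosSemidef :=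
    Finset.sum_induction _ Matrix.PosSemidef (fun a b ha hb => ha.add hb)
      Matrix.PosSemidef.zero (fun i _ => psd_vecMulVec _)
  have hΛpos : Λ.PosDef := hΛ ▸ Matrix.PosDef.add_posSemidef Matrix.PosDef.one hS
  set M := Λ⁻¹ with hMdef
  have hMpos : M.PosDef := hΛpos.inv
  have hMpsd : M.PosSemidef := hMpos.posSemidef
  set c := φ ⬝ᵥ (M *ᵥ φ) with hcdef
  have hc : 0 ≤ c := by simpa using hMpsd.dotProduct_mulVec_nonneg φ
  set a : Fin n → ℝ := fun i => ψ i ⬝ᵥ (M *ᵥ ψ i) with hadef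
  have ha : ∀ i, 0 ≤ a i := fun i => by simpa using hMpsd.dotProduct_mulVec_nonneg (ψ i)
  -- step 1: termwise Cauchy-Schwarz
  have step1 : ∀ i : Fin n, |φ ⬝ᵥ (M *ᵥ ψ i)| ≤ Real.sqrt c * Real.sqrt (a i) := by
    intro i
    have hcs := cs_psd hMpsd φ (ψ i)
    calc |φ ⬝ᵥ (M *ᵥ ψ i)| = Real.sqrt ((φ ⬝ᵥ (M *ᵥ ψ i))^2) :=
          (Real.sqrt_sq_eq_abs _).symm
      _ ≤ Real.sqrt (c * a i) := Real.sqrt_le_sqrt hcs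
      _ = Real.sqrt c * Real.sqrt (a i) := Real.sqrt_mul hc _
  -- step 4: sum of a_i ≤ d
  have hsuma : ∑ i : Fin n, a i ≤ (d : ℝ) := by
    have htr : ∑ i : Fin n, a i = (M * S).trace := by
      rw [hSdef, Finset.mul_sum, Matrix.trace_sum]
      exact Finset.sum_congr rfl fun i _ => (trace_mul_vecMulVec M (ψ i)).symm
    have hMS : M * S = 1 - M := by
      have hdet : IsUnit Λ.det := isUnit_iff_ne_zero.2 hΛpos.det_pos.ne'
      have hSeq : S = Λ - 1 := by rw [hΛ]; abel
      rw [hSeq, Matrix.mul_sub, Matrix.mul_one, Matrix.nonsing_inv_mul Λ hdet]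
    rw [htr, hMS]
    have : (1 - M : Matrix (Fin d) (Fin d) ℝ).trace = (d : ℝ) - M.trace := by
      rw [Matrix.trace_sub, Matrix.trace_one, Fintype.card_fin]
    rw [this]
    linarith [trace_nonneg_psd hMpsd]
  -- step 3: sum of sqrt(a i) ≤ sqrt n * sqrt (sum a)
  have step3 : ∑ i : Fin n, Real.sqrt (a i)
      ≤ Real.sqrt n * Real.sqrt (∑ i : Fin n, a i) := by
    have hsq : (∑ i : Fin n, Real.sqrt (a i))^2 ≤ (∑ _i : Fin n, (1:ℝ)) * ∑ i : Fin n, a i :=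
      Finset.sum_sq_le_sum_mul_sum_of_sq_eq_mul _ (fun _ _ => zero_le_one)
        (fun i _ => ha i) (fun i _ => by rw [Real.sq_sqrt (ha i), one_mul])
    have hnn : 0 ≤ ∑ i : Fin n, Real.sqrt (a i) :=
      Finset.sum_nonneg fun i _ => Real.sqrt_nonneg _
    calc ∑ i : Fin n, Real.sqrt (a i)
        = Real.sqrt ((∑ i : Fin n, Real.sqrt (a i))^2) := (Real.sqrt_sq hnn).symm
      _ ≤ Real.sqrt ((∑ _i : Fin n, (1:ℝ)) * ∑ i : Fin n, a i) := Real.sqrt_le_sqrt hsq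
      _ = Real.sqrt n * Real.sqrt (∑ i : Fin n, a i) := by
          rw [Real.sqrt_mul (by positivity)]
          simp
  calc ∑ i : Fin n, |φ ⬝ᵥ (M *ᵥ ψ i)|
      ≤ ∑ i : Fin n, Real.sqrt c * Real.sqrt (a i) :=
        Finset.sum_le_sum fun i _ => step1 i
    _ = Real.sqrt c * ∑ i : Fin n, Real.sqrt (a i) := by rw [Finset.mul_sum]
    _ ≤ Real.sqrt c * (Real.sqrt n * Real.sqrt (∑ i : Fin n, a i)) := by
        apply mul_le_mul_of_nonneg_left step3 (Real.sqrt_nonneg _)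
    _ ≤ Real.sqrt c * (Real.sqrt n * Real.sqrt d) := by
        apply mul_le_mul_of_nonneg_left _ (Real.sqrt_nonneg _)
        exact mul_le_mul_of_nonneg_left (Real.sqrt_le_sqrt hsuma) (Real.sqrt_nonneg _)
    _ = Real.sqrt ((d : ℝ) * n) * Real.sqrt c := by
        rw [Real.sqrt_mul (by positivity)]
        ring
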